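/- The inverse of the homeomorphism H (from the counterexample) is given by G(y) = y + ε for y ≥ 1-ε, G(y) = (y/(1-ε))^{1-ε} for 0 < y < 1-ε, G(0) = 0, G(y) = -((1-ε)³(-y)^{-2} + ε)^{-1/2} for -1+ε < y < 0, and G(y) = y - ε for y ≤ ε - 1; that is, G(H(x)) = x and H(G(y)) = y for all x, y ∈ ℝ. -/

import Mathlib

noncomputable def Hmap (ε : ℝ) (x : ℝ) : ℝ :=
  if 1 ≤ x then x - ε
  else if 0 < x then (1 - ε) * x ^ ((1 : ℝ) / (1 - ε))
  else if x = 0 then 0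
  else if -1 < x then -((1 - ε) ^ ((3 : ℝ) / 2) * ((x ^ 2)⁻¹ - ε) ^ (-(1 / 2 : ℝ)))
  else x + ε

noncomputable def Gmap (ε : ℝ) (y : ℝ) : ℝ :=
  if 1 - ε ≤ y then y + ε
  else if 0 < y then (y / (1 - ε)) ^ (1 - ε)
  else if y = 0 then 0
  else if -1 + ε < y then -(((1 - ε) ^ 3 * ((-y) ^ 2)⁻¹ + ε) ^ (-(1 / 2 : ℝ)))
  else y - ε

lemma sq_rpow' {a : ℝ} (ha : 0 ≤ a) (p : ℝ) : (a ^ p) ^ (2:ℕ) = a ^ (p * 2) := by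
  rw [← Real.rpow_natCast (a ^ p) 2, ← Real.rpow_mul ha]; norm_num

lemma inv_sq_rpow' {a : ℝ} (ha : 0 ≤ a) : ((a ^ 2)⁻¹) ^ (-(1/2):ℝ) = a := by
  rw [← Real.rpow_natCast a 2, ← Real.rpow_neg_one (a ^ ((2:ℕ):ℝ)), ← Real.rpow_mul ha,
    ← Real.rpow_mul ha]
  norm_num

theorem stmt_9 (ε : ℝ) (hε : 0 < ε) (hε3 : ε < 1 / 3) :
    (∀ x : ℝ, Gmap ε (Hmap ε x) = x) ∧ (∀ y : ℝ, Hmap ε (Gmap ε y) = y) := by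
  have he1 : ε < 1 := by linarith
  have h1e : (0:ℝ) < 1 - ε := by linarith
  constructor
  · intro x
    by_cases h1 : 1 ≤ x
    · rw [Hmap, if_pos h1, Gmap, if_pos (by linarith : 1 - ε ≤ x - ε)]; ring
    · push_neg at h1
      by_cases h2 : 0 < x
      · rw [Hmap, if_neg (not_le.mpr h1), if_pos h2]
        have hu0 : 0 < x ^ ((1:ℝ)/(1-ε)) := Real.rpow_pos_of_pos h2 _
        have hu1 : x ^ ((1:ℝ)/(1-ε)) < 1 :=
          Real.rpow_lt_one h2.le h1 (by positivity)
        have hlt : (1 - ε) * x ^ ((1:ℝ)/(1-ε)) < 1 - ε := by nlinarith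
        rw [Gmap, if_neg (not_le.mpr hlt), if_pos (by positivity),
          mul_div_cancel_left₀ _ (ne_of_gt h1e), ← Real.rpow_mul h2.le,
          one_div_mul_cancel (ne_of_gt h1e), Real.rpow_one]
      · push_neg at h2
        by_cases h0 : x = 0
        · subst h0
          rw [Hmap, if_neg (by norm_num), if_neg (by norm_num), if_pos rfl,
            Gmap, if_neg (by linarith), if_neg (by norm_num), if_pos rfl]
        · have hx0 : x < 0 := lt_of_le_of_ne h2 h0
          by_cases hm1 : -1 < x
          · rw [Hmap, if_neg (not_le.mpr h1), if_neg (not_lt.mpr h2), if_neg h0, if_pos hm1]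
            have hx2 : 0 < x ^ 2 := by positivity
            have hx2' : x ^ 2 < 1 := by nlinarith
            have hinv : 1 < (x ^ 2)⁻¹ := one_lt_inv_iff₀.mpr ⟨hx2, hx2'⟩
            set A := (x ^ 2)⁻¹ - ε with hAdef
            have hApos : 0 < A := by simp only [hAdef]; linarith
            have hA1e : 1 - ε < A := by simp only [hAdef]; linarith
            set t := (1 - ε) ^ ((3:ℝ)/2) * A ^ (-(1/2:ℝ)) with htdef
            have ht0 : 0 < t :=
              mul_pos (Real.rpow_pos_of_pos h1e _) (Real.rpow_pos_of_pos hApos _)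
            have ht2 : t ^ 2 = (1 - ε) ^ 3 * A⁻¹ := by
              rw [htdef, mul_pow, sq_rpow' h1e.le, sq_rpow' hApos.le]
              norm_num
              rw [Real.rpow_neg_one]
              norm_num
            have ht1 : t < 1 - ε := by
              refine lt_of_pow_lt_pow_left₀ 2 h1e.le ?_
              rw [ht2]
              have hAi : 0 < A⁻¹ := inv_pos.mpr hApos
              nlinarith [mul_inv_cancel₀ (ne_of_gt hApos),
                mul_pos hAi (sub_pos.mpr hA1e), pow_pos h1e 2]
            rw [Gmap, if_neg (by linarith), if_neg (by linarith),
              if_neg (by intro h; linarith [neg_eq_zero.mp h]),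
              if_pos (by linarith : -1 + ε < -t), neg_neg]
            have key : (1 - ε) ^ 3 * (t ^ 2)⁻¹ + ε = (x ^ 2)⁻¹ := by
              rw [ht2, mul_inv, inv_inv, ← mul_assoc,
                mul_inv_cancel₀ (pow_ne_zero 3 (ne_of_gt h1e)), one_mul, hAdef]; ring
            rw [key, ← neg_sq x, inv_sq_rpow' (by linarith : (0:ℝ) ≤ -x), neg_neg]
          · push_neg at hm1
            rw [Hmap, if_neg (not_le.mpr h1), if_neg (not_lt.mpr h2), if_neg h0,
              if_neg (not_lt.mpr hm1)]
            rw [Gmap, if_neg (by linarith), if_neg (by linarith),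
              if_neg (by intro h; linarith), if_neg (by intro h; linarith)]
            ring
  · intro y
    by_cases h1 : 1 - ε ≤ y
    · rw [Gmap, if_pos h1, Hmap, if_pos (by linarith : (1:ℝ) ≤ y + ε)]; ring
    · push_neg at h1
      by_cases h2 : 0 < y
      · rw [Gmap, if_neg (not_le.mpr h1), if_pos h2]
        have hq0 : 0 < y / (1 - ε) := div_pos h2 h1e
        have hq1 : y / (1 - ε) < 1 := (div_lt_one h1e).mpr h1
        have hu0 : 0 < (y / (1 - ε)) ^ (1 - ε) := Real.rpow_pos_of_pos hq0 _
        have hu1 : (y / (1 - ε)) ^ (1 - ε) < 1 := Real.rpow_lt_one hq0.le hq1 h1e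
        rw [Hmap, if_neg (not_le.mpr hu1), if_pos hu0, ← Real.rpow_mul hq0.le,
          mul_one_div_cancel (ne_of_gt h1e), Real.rpow_one,
          mul_div_cancel₀ _ (ne_of_gt h1e)]
      · push_neg at h2
        by_cases h0 : y = 0
        · subst h0
          rw [Gmap, if_neg (by linarith), if_neg (by norm_num), if_pos rfl,
            Hmap, if_neg (by norm_num), if_neg (by norm_num), if_pos rfl]
        · have hy0 : y < 0 := lt_of_le_of_ne h2 h0
          by_cases hm1 : -1 + ε < y
          · rw [Gmap, if_neg (not_le.mpr h1), if_neg (not_lt.mpr h2), if_neg h0, if_pos hm1,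
              neg_sq]
            have hy2 : 0 < y ^ 2 := by positivity
            have hy2' : y ^ 2 < (1 - ε) ^ 2 := by nlinarith
            set B := (1 - ε) ^ 3 * (y ^ 2)⁻¹ + ε with hBdef
            have hB1 : 1 < B := by
              rw [hBdef]
              have hyi : 0 < (y ^ 2)⁻¹ := inv_pos.mpr hy2
              nlinarith [mul_inv_cancel₀ (ne_of_gt hy2),
                mul_pos (sub_pos.mpr hy2') hyi]
            have hB0 : 0 < B := by linarith
            set s := B ^ (-(1/2:ℝ)) with hsdef
            have hs0 : 0 < s := Real.rpow_pos_of_pos hB0 _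
            have hs2 : s ^ 2 = B⁻¹ := by
              rw [hsdef, sq_rpow' hB0.le]
              norm_num [Real.rpow_neg_one]
            have hs1 : s < 1 := by
              refine lt_of_pow_lt_pow_left₀ 2 zero_le_one ?_
              rw [hs2, one_pow]
              exact inv_lt_one_of_one_lt₀ hB1
            rw [Hmap, if_neg (by linarith), if_neg (by linarith),
              if_neg (by intro h; linarith [neg_eq_zero.mp h]),
              if_pos (by linarith : (-1:ℝ) < -s), neg_sq, hs2, inv_inv]
            have key : B - ε = (1 - ε) ^ 3 * (y ^ 2)⁻¹ := by rw [hBdef]; ring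
            rw [key, Real.mul_rpow (by positivity) (inv_nonneg.mpr hy2.le),
              ← neg_sq y, inv_sq_rpow' (by linarith : (0:ℝ) ≤ -y)]
            have hpow : (1 - ε) ^ ((3:ℝ)/2) * ((1 - ε) ^ 3) ^ (-(1/2:ℝ)) = 1 := by
              rw [← Real.rpow_natCast (1 - ε) 3, ← Real.rpow_mul h1e.le,
                ← Real.rpow_add h1e]
              norm_num
            rw [← mul_assoc, hpow, one_mul, neg_neg]
          · push_neg at hm1
            rw [Gmap, if_neg (not_le.mpr h1), if_neg (not_lt.mpr h2), if_neg h0,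
              if_neg (not_lt.mpr hm1)]
            rw [Hmap, if_neg (by intro h; linarith), if_neg (by intro h; linarith),
              if_neg (by intro h; linarith), if_neg (by intro h; linarith)]
            ring
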